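/- Let q be an odd prime power, let t ∈ 𝔽_q^*, and let f(x) = x^{q−2} + t·x^{q²−q−1}. Set ε = (−1)^{(q+1)/2} · t^{(q−1)/2} ∈ 𝔽_q (so ε = ±1, and t^{(q−1)/2} = η(t) is the quadratic character of t). If f is a permutation polynomial of 𝔽_{q²}, then t² − 2εt − 3 = 0 in 𝔽_q, i.e., (t + ε)(t − 3ε) = 0, so t = −ε or t = 3ε. -/

import Mathlib

open Finset

private lemma castZero {K : Type} [Field K] (p : ℕ) (hchar : CharP K p) {c : ℕ}
    (h : p ∣ c) : ((c : ℕ) : K) = 0 := by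
  haveI := hchar
  exact (CharP.cast_eq_zero_iff K p c).mpr h

private lemma cast_choose_q {K : Type} [Field K] (p : ℕ) (hp : p.Prime) (hchar : CharP K p)
    (mm q : ℕ) (hq : q = p ^ mm) {j : ℕ} (h0 : j ≠ 0) (hj : j ≠ q) :
    ((q.choose j : ℕ) : K) = 0 := by
  refine castZero p hchar ?_
  subst hq
  exact hp.dvd_choose_pow h0 hj

private lemma cast_choose_2q {K : Type} [Field K] (p : ℕ) (hp : p.Prime) (hchar : CharP K p)
    (mm q : ℕ) (hq : q = p ^ mm) {a : ℕ} (h0 : 0 < a) (ha : a < 2 * q) (haq : a ≠ q) :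
    (((2 * q).choose a : ℕ) : K) = 0 := by
  have h2q : 2 * q = q + q := by ring
  rw [h2q, Nat.add_choose_eq]
  push_cast
  refine Finset.sum_eq_zero ?_
  rintro ⟨i, j⟩ hij
  rw [Finset.HasAntidiagonal.mem_antidiagonal] at hij
  simp only [] at hij
  rcases Nat.lt_trichotomy i q with h | h | h
  · by_cases hi0 : i = 0
    · subst hi0
      simp only [Nat.zero_add] at hij
      subst hij
      rcases Nat.lt_trichotomy j q with h' | h' | h'
      · rw [cast_choose_q p hp hchar mm q hq (j := j) (by omega) (by omega)]
        ring
      · exact absurd h' haq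
      · rw [Nat.choose_eq_zero_of_lt h']
        push_cast
        ring
    · rw [cast_choose_q p hp hchar mm q hq (j := i) hi0 (by omega)]
      ring
  · -- i = q, so j = a - q ≠ 0 (else a = q), and j < q
    have hj0 : j ≠ 0 := by omega
    have hjq : j ≠ q := by omega
    rw [cast_choose_q p hp hchar mm q hq hj0 hjq]
    ring
  · rw [Nat.choose_eq_zero_of_lt h]
    push_cast
    ring

private lemma cast_choose_main {K : Type} [Field K] (p : ℕ) (hp : p.Prime) (hchar : CharP K p)
    (mm q : ℕ) (hq : q = p ^ mm) (hq0 : (q : K) = 0) :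
    ∀ a, a < q → (((2 * q - 2).choose a : ℕ) : K) = (-1) ^ a * ((a : K) + 1) := by
  intro a
  induction a using Nat.strong_induction_on with
  | _ a ih =>
    match a with
    | 0 => intro _; simp
    | 1 =>
      intro ha
      have hq2 : 2 ≤ q := by omega
      rw [Nat.choose_one_right]
      have : ((2 * q - 2 : ℕ) : K) = 2 * (q : K) - 2 := by
        have : (2 : ℕ) ≤ 2 * q := by omega
        push_cast [Nat.cast_sub this]
        ring
      rw [this, hq0]
      push_cast
      ring
    | (b+2) =>
      intro ha
      have key0 : ∀ n : ℕ, (n+2).choose (b+2)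
          = n.choose b + 2 * (n.choose (b+1)) + n.choose (b+2) := by
        intro n
        rw [Nat.choose_succ_succ' (n + 1) (b+1), Nat.choose_succ_succ' n b,
          Nat.choose_succ_succ' n (b+1)]
        ring
      have key : (2*q).choose (b+2)
          = (2*q - 2).choose b + 2 * ((2*q - 2).choose (b+1)) + (2*q - 2).choose (b+2) := by
        conv_lhs => rw [show 2 * q = (2*q - 2) + 2 by omega]
        exact key0 _
      have hz : (((2*q).choose (b+2) : ℕ) : K) = 0 :=
        cast_choose_2q p hp hchar mm q hq (by omega) (by omega) (by omega)
      have hb0 := ih b (by omega) (by omega)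
      have hb1 := ih (b+1) (by omega) (by omega)
      have hcast : ((((2*q - 2).choose b + 2 * ((2*q - 2).choose (b+1))
          + (2*q - 2).choose (b+2) : ℕ)) : K) = 0 := by rw [← key]; exact hz
      push_cast at hcast
      rw [hb0, hb1] at hcast
      push_cast at hcast ⊢
      linear_combination hcast

private lemma sum_pow_field {K : Type} [Field K] [Fintype K] (E : ℕ) (hE : E ≠ 0) :
    ∑ x : K, x ^ E = if (Fintype.card K - 1) ∣ E then -1 else 0 := by
  classical
  let φ : Kˣ ↪ K := ⟨fun x ↦ x, Units.val_injective⟩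
  have hmap : univ.map φ = univ \ {0} := by
    ext x
    simpa only [mem_map, mem_univ, Function.Embedding.coeFn_mk, true_and, mem_sdiff,
      mem_singleton, φ] using (show (∃ a : Kˣ, (a : K) = x) ↔ x ≠ 0 from isUnit_iff_ne_zero)
  calc
    ∑ x : K, x ^ E = ∑ x ∈ univ \ {(0 : K)}, x ^ E := by
      rw [← sum_sdiff ({0} : Finset K).subset_univ, sum_singleton, zero_pow hE, add_zero]
    _ = ∑ x : Kˣ, ((x ^ E : Kˣ) : K) := by
      rw [← hmap, univ.sum_map φ]
      simp [φ]
    _ = _ := by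
      rw [← FiniteField.sum_pow_units K E]
      simp

/-- Let `q` be an odd prime power, `t ∈ 𝔽_q^*`, `f(x) = x^(q-2) + t·x^(q²-q-1)`,
and `ε = (-1)^((q+1)/2)·t^((q-1)/2)` (so `ε = ±1`, `t^((q-1)/2) = η(t)` the
quadratic character). If `f` is a permutation polynomial of `𝔽_{q²}`, then
`t² - 2εt - 3 = 0`, i.e. `(t+ε)(t-3ε) = 0`, so `t = -ε` or `t = 3ε`. -/
theorem stmt_18 (p m q : ℕ) (hp : p.Prime) (hq : q = p ^ m) (hq2 : 2 < q) (hqodd : Odd q)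
    (K : Type) [Field K] [Fintype K] (hK : Fintype.card K = q ^ 2)
    (t : K) (ht0 : t ≠ 0) (htq : t ^ q = t)
    (ε : K) (hε : ε = (-1) ^ ((q + 1) / 2) * t ^ ((q - 1) / 2))
    (hbij : Function.Bijective (fun x : K => x ^ (q - 2) + t * x ^ (q ^ 2 - q - 1))) :
    t ^ 2 - 2 * ε * t - 3 = 0 ∧ (t + ε) * (t - 3 * ε) = 0 ∧ (t = -ε ∨ t = 3 * ε) := by
  classical
  have hm0 : m ≠ 0 := by rintro rfl; rw [pow_zero] at hq; omega
  -- the characteristic of K is p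
  have hchar : CharP K p := by
    obtain ⟨pc, hpc⟩ := CharP.exists K
    haveI := hpc
    have hpcp : pc.Prime := CharP.char_is_prime K pc
    obtain ⟨nn, -, hcard⟩ := FiniteField.card K pc
    have h1 : pc ^ (nn : ℕ) = p ^ (2 * m) := by
      rw [← hcard, hK, hq, ← pow_mul, mul_comm m 2]
    have hdvd : pc ∣ p ^ (2 * m) := by
      rw [← h1]; exact dvd_pow_self pc nn.ne_zero
    have hpp : pc = p := (Nat.prime_dvd_prime_iff_eq hpcp hp).mp (hpcp.dvd_of_dvd_pow hdvd)
    rwa [hpp] at hpc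
  have hq0 : (q : K) = 0 := by
    rw [hq]
    push_cast
    rw [CharP.cast_eq_zero K p]
    exact zero_pow hm0
  -- q^2 as a variable
  have hq2q : q + 2 ≤ q ^ 2 := by nlinarith
  obtain ⟨s, hs⟩ : ∃ s, q ^ 2 = s := ⟨_, rfl⟩
  rw [hs] at hK hbij hq2q
  have hsZ : (s : ℤ) = (q : ℤ) ^ 2 := by rw [← hs]; push_cast; ring
  obtain ⟨r, hr⟩ := hqodd
  have hr1 : 1 ≤ r := by omega
  -- the exponent function
  set E : ℕ → ℕ := fun k => (q - 2) * k + (s - q - 1) * (2 * q - 2 - k) with hE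
  have hcastE : ∀ k, k ≤ 2 * q - 2 → (E k : ℤ)
      = ((q : ℤ) - 1) * (2 * ((q : ℤ) ^ 2 - q - 1) - k * ((q : ℤ) - 1)) := by
    intro k hk
    have h1 : 2 ≤ q := by omega
    have h2 : q + 1 ≤ s := by omega
    have h3 : (1 : ℕ) ≤ s - q := by omega
    simp only [hE]
    push_cast [Nat.cast_sub h1, Nat.cast_sub (show q ≤ s by omega),
      Nat.cast_sub h3, Nat.cast_sub hk, Nat.cast_sub (show 2 ≤ 2*q by omega)]
    linear_combination (2 * (q:ℤ) - 2 - (k:ℤ)) * hsZ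
  have hEpos : ∀ k, k ≤ 2 * q - 2 → E k ≠ 0 := by
    intro k hk
    have h := hcastE k hk
    have hkq : (k : ℤ) ≤ 2 * (q : ℤ) - 2 := by
      have := hk; omega
    have hq3 : (3 : ℤ) ≤ (q : ℤ) := by exact_mod_cast (by omega : (3:ℕ) ≤ q)
    have hpos : (0 : ℤ) < (E k : ℤ) := by
      rw [h]
      have h2 : (0:ℤ) < 2 * ((q : ℤ) ^ 2 - q - 1) - k * ((q : ℤ) - 1) := by nlinarith
      nlinarith
    intro hzero
    rw [hzero] at hpos
    simp at hpos
  have hDiv : ∀ k, k ≤ 2 * q - 2 → ((s - 1) ∣ E k ↔ (r + 1) ∣ (k + 1)) := by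
    intro k hk
    have h2 : q + 1 ≤ s := by omega
    constructor
    · intro hd
      have hdZ : ((s : ℤ) - 1) ∣ (E k : ℤ) := by
        have : ((s - 1 : ℕ) : ℤ) ∣ ((E k : ℕ) : ℤ) := Int.natCast_dvd_natCast.mpr hd
        rwa [Nat.cast_sub (by omega : 1 ≤ s), Nat.cast_one] at this
      rw [hcastE k hk, hsZ] at hdZ
      have hfac : ((q:ℤ) - 1) * ((q:ℤ) + 1) ∣ ((q : ℤ) - 1) * (2 * ((q : ℤ) ^ 2 - q - 1) - k * ((q : ℤ) - 1)) := by
        have : ((q:ℤ) - 1) * ((q:ℤ) + 1) = (q:ℤ)^2 - 1 := by ring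
        rwa [this]
      have hq1 : ((q:ℤ) - 1) ≠ 0 := by
        have : (3:ℤ) ≤ (q:ℤ) := by exact_mod_cast (by omega : (3:ℕ) ≤ q)
        omega
      have hqd : ((q:ℤ) + 1) ∣ (2 * ((q : ℤ) ^ 2 - q - 1) - k * ((q : ℤ) - 1)) :=
        (mul_dvd_mul_iff_left hq1).mp hfac
      have hrw : (2 * ((q : ℤ) ^ 2 - q - 1) - k * ((q : ℤ) - 1))
          = ((q:ℤ) + 1) * (2 * q - k - 4) + 2 * (k + 1) := by ring
      rw [hrw] at hqd
      have h2k : ((q:ℤ) + 1) ∣ 2 * ((k:ℤ) + 1) := (dvd_add_right (Dvd.intro _ rfl)).mp hqd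
      have h2kN : (q + 1) ∣ 2 * (k + 1) := by
        have : ((q + 1 : ℕ) : ℤ) ∣ ((2 * (k + 1) : ℕ) : ℤ) := by push_cast; exact h2k
        exact_mod_cast this
      have hq2r : q + 1 = 2 * (r + 1) := by omega
      rw [hq2r] at h2kN
      exact (mul_dvd_mul_iff_left (by norm_num : (2:ℕ) ≠ 0)).mp h2kN
    · intro hd
      obtain ⟨j, hj⟩ := hd
      have hdZ : ((s : ℤ) - 1) ∣ (E k : ℤ) := by
        rw [hcastE k hk, hsZ]
        have hkj : (k : ℤ) = (r + 1) * j - 1 := by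
          have : (k:ℤ) + 1 = ((r:ℤ) + 1) * j := by exact_mod_cast congrArg (Nat.cast : ℕ → ℤ) hj
          omega
        have hqr : (q : ℤ) = 2 * r + 1 := by exact_mod_cast congrArg (Nat.cast : ℕ → ℤ) hr
        refine ⟨2 * (q:ℤ) - (k:ℤ) - 4 + (j:ℤ), ?_⟩
        rw [hkj, hqr]
        ring
      have : ((s - 1 : ℕ) : ℤ) ∣ ((E k : ℕ) : ℤ) := by
        rwa [Nat.cast_sub (by omega : 1 ≤ s), Nat.cast_one]
      exact_mod_cast this
  -- 2 is invertible
  have hp2 : p ≠ 2 := by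
    rintro rfl
    have he : Even q := by
      rw [hq]; exact (Nat.even_pow).mpr ⟨even_two, hm0⟩
    obtain ⟨c, hc⟩ := he
    omega
  have h2K : (2 : K) ≠ 0 := by
    intro h
    have h2 : ((2 : ℕ) : K) = 0 := by exact_mod_cast h
    have hdvd := (CharP.cast_eq_zero_iff K p 2).mp h2
    exact hp2 ((Nat.prime_dvd_prime_iff_eq hp Nat.prime_two).mp hdvd)
  have hρ : 2 * (r : K) + 1 = 0 := by
    have h1 : ((2 * r + 1 : ℕ) : K) = 0 := by rw [← hr]; exact hq0
    push_cast at h1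
    linear_combination h1
  have hs3 : 3 * q ≤ s := by
    have : 3 * q ≤ q ^ 2 := by nlinarith
    omega
  -- the moment sum vanishes
  have hS : ∑ x : K, (x ^ (q - 2) + t * x ^ (s - q - 1)) ^ (2 * q - 2) = 0 := by
    have h1 : ∑ x : K, (x ^ (q - 2) + t * x ^ (s - q - 1)) ^ (2 * q - 2)
        = ∑ y : K, y ^ (2 * q - 2) :=
      Fintype.sum_bijective _ hbij _ _ (fun x => rfl)
    rw [h1]
    apply FiniteField.sum_pow_lt_card_sub_one
    rw [hK]
    omega
  -- binomial expansion of each summand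
  have hExp : ∀ x : K, (x ^ (q - 2) + t * x ^ (s - q - 1)) ^ (2 * q - 2)
      = ∑ k ∈ range (2 * q - 2 + 1),
          x ^ (E k) * (t ^ (2 * q - 2 - k) * (((2 * q - 2).choose k : ℕ) : K)) := by
    intro x
    rw [add_pow]
    refine Finset.sum_congr rfl ?_
    intro k hk
    rw [Finset.mem_range] at hk
    rw [mul_pow, ← pow_mul, ← pow_mul]
    simp only [hE]
    rw [pow_add]
    ring
  have hstep : (0 : K) = ∑ k ∈ range (2 * q - 2 + 1),
      (if (s - 1) ∣ E k then (-1 : K) else 0)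
        * (t ^ (2 * q - 2 - k) * (((2 * q - 2).choose k : ℕ) : K)) := by
    calc (0 : K) = ∑ x : K, (x ^ (q - 2) + t * x ^ (s - q - 1)) ^ (2 * q - 2) := hS.symm
      _ = ∑ x : K, ∑ k ∈ range (2 * q - 2 + 1),
            x ^ (E k) * (t ^ (2 * q - 2 - k) * (((2 * q - 2).choose k : ℕ) : K)) :=
          Finset.sum_congr rfl fun x _ => hExp x
      _ = ∑ k ∈ range (2 * q - 2 + 1), ∑ x : K,
            x ^ (E k) * (t ^ (2 * q - 2 - k) * (((2 * q - 2).choose k : ℕ) : K)) :=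
          Finset.sum_comm
      _ = ∑ k ∈ range (2 * q - 2 + 1),
            (∑ x : K, x ^ (E k)) * (t ^ (2 * q - 2 - k) * (((2 * q - 2).choose k : ℕ) : K)) :=
          Finset.sum_congr rfl fun k _ => (Finset.sum_mul _ _ _).symm
      _ = _ := by
          refine Finset.sum_congr rfl fun k hk => ?_
          rw [Finset.mem_range] at hk
          rw [sum_pow_field (E k) (hEpos k (by omega)), hK]
  simp only [ite_mul, neg_one_mul, zero_mul] at hstep
  rw [← Finset.sum_filter] at hstep
  rcases eq_or_lt_of_le hr1 with hr2 | hr2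
  · -- q = 3 : contradiction
    exfalso
    have hfilt : (range (2 * q - 2 + 1)).filter (fun k => (s - 1) ∣ E k) = {1, 3} := by
      ext k
      simp only [Finset.mem_filter, Finset.mem_range, Finset.mem_insert, Finset.mem_singleton]
      constructor
      · rintro ⟨hk, hd⟩
        obtain ⟨j, hj⟩ := (hDiv k (by omega)).mp hd
        have hj4 : j < 3 := by
          by_contra hc
          push_neg at hc
          have h3 : (r + 1) * 3 ≤ (r + 1) * j := Nat.mul_le_mul_left _ hc
          rw [← hj] at h3
          omega
        interval_cases j <;> omega
      · rintro (rfl | rfl)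
        · exact ⟨by omega, (hDiv 1 (by omega)).mpr ⟨1, by omega⟩⟩
        · exact ⟨by omega, (hDiv 3 (by omega)).mpr ⟨2, by omega⟩⟩
    rw [hfilt, Finset.sum_insert (by simp), Finset.sum_singleton] at hstep
    have hq3 : q = 3 := by omega
    rw [hq3] at hstep htq
    norm_num at hstep
    rw [htq] at hstep
    have h3K : (3 : K) = 0 := by
      have := hq0
      rw [hq3] at this
      exact_mod_cast this
    apply ht0
    have h2t : (2 : K) * t = 0 := by linear_combination hstep - 2 * t * h3K
    exact (mul_eq_zero.mp h2t).resolve_left h2K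
  · -- main case : q ≥ 5
    have hfilt : (range (2 * q - 2 + 1)).filter (fun k => (s - 1) ∣ E k)
        = {r, 2 * r + 1, 3 * r + 2} := by
      ext k
      simp only [Finset.mem_filter, Finset.mem_range, Finset.mem_insert, Finset.mem_singleton]
      constructor
      · rintro ⟨hk, hd⟩
        obtain ⟨j, hj⟩ := (hDiv k (by omega)).mp hd
        have hj4 : j < 4 := by
          by_contra hc
          push_neg at hc
          have h4 : (r + 1) * 4 ≤ (r + 1) * j := Nat.mul_le_mul_left _ hc
          rw [← hj] at h4
          omega
        interval_cases j <;> omega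
      · rintro (rfl | rfl | rfl)
        · exact ⟨by omega, (hDiv _ (by omega)).mpr ⟨1, by omega⟩⟩
        · exact ⟨by omega, (hDiv _ (by omega)).mpr ⟨2, by omega⟩⟩
        · exact ⟨by omega, (hDiv _ (by omega)).mpr ⟨3, by omega⟩⟩
    rw [hfilt, Finset.sum_insert (by simp; omega), Finset.sum_insert (by simp; omega),
      Finset.sum_singleton] at hstep
    rw [show 2 * q - 2 - r = 3 * r by omega, show 2 * q - 2 - (2 * r + 1) = 2 * r - 1 by omega,
      show 2 * q - 2 - (3 * r + 2) = r - 2 by omega] at hstep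
    have hv1 : (((2 * q - 2).choose r : ℕ) : K) = (-1) ^ r * ((r : K) + 1) :=
      cast_choose_main p hp hchar m q hq hq0 r (by omega)
    have hsymm2 : (2 * q - 2).choose (2 * r + 1) = (2 * q - 2).choose (2 * r - 1) := by
      have h := Nat.choose_symm (show 2 * r + 1 ≤ 2 * q - 2 by omega)
      rw [show 2 * q - 2 - (2 * r + 1) = 2 * r - 1 by omega] at h
      exact h.symm
    have hv2 : (((2 * q - 2).choose (2 * r + 1) : ℕ) : K) = 1 := by
      rw [hsymm2, cast_choose_main p hp hchar m q hq hq0 (2 * r - 1) (by omega)]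
      have hodd : Odd (2 * r - 1) := ⟨r - 1, by omega⟩
      rw [hodd.neg_one_pow]
      have hc : ((2 * r - 1 : ℕ) : K) = 2 * (r : K) - 1 := by
        push_cast [Nat.cast_sub (show 1 ≤ 2 * r by omega)]
        ring
      rw [hc]
      linear_combination -hρ
    have hsymm3 : (2 * q - 2).choose (3 * r + 2) = (2 * q - 2).choose (r - 2) := by
      have h := Nat.choose_symm (show 3 * r + 2 ≤ 2 * q - 2 by omega)
      rw [show 2 * q - 2 - (3 * r + 2) = r - 2 by omega] at h
      exact h.symm
    have hv3 : (((2 * q - 2).choose (3 * r + 2) : ℕ) : K) = (-1) ^ r * ((r : K) - 1) := by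
      rw [hsymm3, cast_choose_main p hp hchar m q hq hq0 (r - 2) (by omega)]
      have h1 : (-1 : K) ^ (r - 2) = (-1) ^ r := by
        conv_rhs => rw [show r = (r - 2) + 2 by omega]
        rw [pow_add]
        norm_num
      rw [h1]
      have hc : ((r - 2 : ℕ) : K) = (r : K) - 2 := by
        push_cast [Nat.cast_sub (show 2 ≤ r by omega)]
        ring
      rw [hc]
      ring
    rw [hv1, hv2, hv3] at hstep
    -- power reductions
    have htq' : t ^ (2 * r + 1) = t := by rw [← hr]; exact htq
    have htpow : t ^ (2 * r) = 1 := by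
      have h1 : t ^ (2 * r) * t = 1 * t := by rw [← pow_succ, htq', one_mul]
      exact mul_right_cancel₀ ht0 h1
    have h3r : t ^ (3 * r) = t ^ r := by
      rw [show 3 * r = 2 * r + r by ring, pow_add, htpow, one_mul]
    have hB : t ^ (2 * r - 1) * t ^ 2 = t := by
      rw [← pow_add, show 2 * r - 1 + 2 = 2 * r + 1 by omega, htq']
    have hC : t ^ (r - 2) * t ^ 2 = t ^ r := by
      rw [← pow_add]
      congr 1
      omega
    have hgg : t ^ r * t ^ r = 1 := by
      rw [← pow_add, show r + r = 2 * r by ring, htpow]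
    have hσσ : ((-1 : K) ^ r) * ((-1 : K) ^ r) = 1 := by
      rw [← pow_add]
      exact Even.neg_one_pow ⟨r, rfl⟩
    rw [h3r] at hstep
    have hεv : ε = -((-1 : K) ^ r * t ^ r) := by
      rw [hε, show (q + 1) / 2 = r + 1 by omega, show (q - 1) / 2 = r by omega, pow_succ]
      ring
    have step1 : ((-1 : K) ^ r) * t ^ r * t ^ 2 + 2 * t - 3 * (((-1 : K) ^ r) * t ^ r) = 0 := by
      linear_combination (2 * t ^ 2) * hstep - 2 * hB - 2 * ((-1 : K) ^ r) * ((r : K) - 1) * hC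
        - (t ^ 2 * (t ^ r) * ((-1 : K) ^ r) + (t ^ r) * ((-1 : K) ^ r)) * hρ
    have hgoal1 : t ^ 2 - 2 * ε * t - 3 = 0 := by
      rw [hεv]
      linear_combination ((-1 : K) ^ r * t ^ r) * step1
        - ((-1 : K) ^ r * (-1 : K) ^ r * (t ^ 2 - 3)) * hgg - (t ^ 2 - 3) * hσσ
    have hε2 : ε ^ 2 = 1 := by
      rw [hεv]
      linear_combination (((-1 : K) ^ r) * ((-1 : K) ^ r)) * hgg
        + (1 : K) * hσσ
    have hgoal2 : (t + ε) * (t - 3 * ε) = 0 := by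
      linear_combination hgoal1 - 3 * hε2
    refine ⟨hgoal1, hgoal2, ?_⟩
    rcases mul_eq_zero.mp hgoal2 with h | h
    · exact Or.inl (eq_neg_of_add_eq_zero_left h)
    · exact Or.inr (sub_eq_zero.mp h)
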